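/- arXiv:0801.4851 — 2 statements merged into one kernel-verified Lean document; each statement's English description precedes it below -/
import Mathlib

section
/- In any max game on a graph with n ≥ 2 vertices, for every Nash-routing p and every routing p*, the social cost satisfies SC(p) ≤ (2L + 2⌈log₂ n⌉ + 2)·SC(p*). In particular, the price of anarchy of max games is O(L + log n). -/
open Finset

/-- A routing game: a finite set of players `Fin N`, a graph `G` on the finite
vertex type `V`, and for each player a nonempty finite strategy set of paths
(trails of length at least 1) joining its source to its destination. -/
structure RoutingGame (V : Type) [Fintype V] [DecidableEq V] where
  /-- the underlying graph -/
  G : SimpleGraph V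
  /-- the number of players -/
  N : ℕ
  Npos : 0 < N
  /-- the source of each player -/
  src : Fin N → V
  /-- the destination of each player -/
  dst : Fin N → V
  src_ne_dst : ∀ i, src i ≠ dst i
  /-- the strategy set of each player -/
  strat : ∀ i : Fin N, Finset (G.Walk (src i) (dst i))
  strat_nonempty : ∀ i, (strat i).Nonempty
  strat_trail : ∀ i, ∀ q ∈ strat i, q.IsTrail
  strat_len : ∀ i, ∀ q ∈ strat i, 1 ≤ q.length

namespace RoutingGame

variable {V : Type} [Fintype V] [DecidableEq V] (R : RoutingGame V)

/-- A routing assigns to each player a walk from its source to its destination. -/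
abbrev Routing := ∀ i : Fin R.N, R.G.Walk (R.src i) (R.dst i)

/-- `p` is a valid routing if every player's path belongs to its strategy set. -/
def IsRouting (p : R.Routing) : Prop := ∀ i, p i ∈ R.strat i

/-- The edge congestion `C_e(p)`: the number of players whose path uses `e`. -/
def edgeCong (p : R.Routing) (e : Sym2 V) : ℕ :=
  (Finset.univ.filter fun i => e ∈ (p i).edges).card

/-- The path congestion `C_i(p)` of player `i`. -/
def pathCong (p : R.Routing) (i : Fin R.N) : ℕ :=
  (p i).edges.toFinset.sup (R.edgeCong p)

/-- The network congestion `C(p)`. -/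
def netCong (p : R.Routing) : ℕ :=
  Finset.univ.sup (R.edgeCong p)

/-- The maximum path length `D(p)`. -/
def maxLen (p : R.Routing) : ℕ :=
  Finset.univ.sup fun i => (p i).length

/-- The longest path length `L` over all strategy sets. -/
def Lmax : ℕ :=
  Finset.univ.sup fun i : Fin R.N => (R.strat i).sup fun q => q.length

/-- Player cost in the max game: `pc_i(p) = max (C_i(p)) (D_i(p))`. -/
def pcMax (p : R.Routing) (i : Fin R.N) : ℕ :=
  max (R.pathCong p i) (p i).length

/-- Social cost in the max game: `SC(p) = max (C(p)) (D(p))`. -/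
def SCMax (p : R.Routing) : ℕ := max (R.netCong p) (R.maxLen p)

/-- A Nash-routing of the max game: a routing in which every player is locally
optimal. -/
def NashMax (p : R.Routing) : Prop :=
  R.IsRouting p ∧
    ∀ i, ∀ q ∈ R.strat i, R.pcMax p i ≤ R.pcMax (Function.update p i q) i

/-- A greedy move in the max game takes `p` to `p'` by letting a single player
switch to a strictly cheaper path in its strategy set. -/
def GreedyMoveMax (p p' : R.Routing) : Prop :=
  ∃ i, ∃ q ∈ R.strat i,
    p' = Function.update p i q ∧ R.pcMax p' i < R.pcMax p i

/-- The entry `m_k(p)` of the routing vector of the max game: the number of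
players with path congestion `k` plus the number of players with path length `k`. -/
def mvecMax (p : R.Routing) (k : ℕ) : ℕ :=
  (Finset.univ.filter fun i => R.pathCong p i = k).card +
    (Finset.univ.filter fun i => (p i).length = k).card

/-- The strict order on routing vectors (max game): `M(p') < M(p)` iff the
vectors agree above some index `j` and the entry of `p'` at `j` is smaller. -/
def MLtMax (p' p : R.Routing) : Prop :=
  ∃ j : ℕ, (∀ k, j < k → R.mvecMax p' k = R.mvecMax p k) ∧
    R.mvecMax p' j < R.mvecMax p j

-- AUX 1
lemma edgeCong_update_le' (p : R.Routing) (i : Fin R.N)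
    (q : R.G.Walk (R.src i) (R.dst i)) (e : Sym2 V) :
    R.edgeCong (Function.update p i q) e ≤ R.edgeCong p e + 1 := by
  classical
  have hsub : (Finset.univ.filter fun j => e ∈ ((Function.update p i q) j).edges)
      ⊆ insert i (Finset.univ.filter fun j => e ∈ (p j).edges) := by
    intro j hj
    rcases eq_or_ne j i with rfl | hji
    · exact Finset.mem_insert_self _ _
    · refine Finset.mem_insert_of_mem ?_
      simp only [Finset.mem_filter, Finset.mem_univ, true_and,
        Function.update_of_ne hji] at hj ⊢
      exact hj
  calc R.edgeCong (Function.update p i q) e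
      ≤ (insert i (Finset.univ.filter fun j => e ∈ (p j).edges)).card :=
        Finset.card_le_card hsub
    _ ≤ R.edgeCong p e + 1 := Finset.card_insert_le _ _

-- AUX 2 : nash step
lemma nash_step' (p pstar : R.Routing) (hp : R.NashMax p)
    (hstar : R.IsRouting pstar) (t : ℕ) (ht : R.SCMax pstar < t)
    (i : Fin R.N) (hi : t ≤ R.pathCong p i) :
    ∃ e ∈ (pstar i).edges, t ≤ R.edgeCong p e + 1 := by
  classical
  have hnash := hp.2 i (pstar i) (hstar i)
  have h1 : t ≤ R.pcMax p i := le_trans hi (le_max_left _ _)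
  have h2 : t ≤ R.pcMax (Function.update p i (pstar i)) i := h1.trans hnash
  have hlenstar : (pstar i).length ≤ R.SCMax pstar :=
    le_trans (Finset.le_sup (f := fun j => (pstar j).length) (Finset.mem_univ i))
      (le_max_right _ _)
  have h3 : t ≤ R.pathCong (Function.update p i (pstar i)) i := by
    rcases max_le_iff.mp (le_refl (R.pcMax (Function.update p i (pstar i)) i)) with ⟨hA, hB⟩
    rcases le_max_iff.mp h2 with h | h
    · exact h
    · exfalso
      rw [pcMax] at h2
      have : ((Function.update p i (pstar i)) i).length = (pstar i).length := by
        rw [Function.update_self]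
      omega
  have hpos : (0:ℕ) < t := lt_of_le_of_lt (Nat.zero_le _) ht
  rw [pathCong] at h3
  have h4 : ∃ e ∈ ((Function.update p i (pstar i)) i).edges.toFinset,
      t ≤ R.edgeCong (Function.update p i (pstar i)) e := by
    rwa [Finset.le_sup_iff hpos] at h3
  obtain ⟨e, he, hce⟩ := h4
  rw [Function.update_self] at he
  refine ⟨e, List.mem_toFinset.mp he, ?_⟩
  exact le_trans hce (R.edgeCong_update_le' p i (pstar i) e)

-- AUX 3 : counting step
lemma count_step' (p pstar : R.Routing) (hp : R.NashMax p) (hstar : R.IsRouting pstar)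
    (hV : Nonempty V) (t : ℕ) (ht : R.SCMax pstar < t + 1) :
    (t + 1) * (univ.filter fun e : Sym2 V => t + 1 ≤ R.edgeCong p e).card ≤
      R.Lmax * (R.SCMax pstar *
        (univ.filter fun e : Sym2 V => t ≤ R.edgeCong p e).card) := by
  classical
  set F1 := univ.filter fun e : Sym2 V => t + 1 ≤ R.edgeCong p e with hF1
  set F0 := univ.filter fun e : Sym2 V => t ≤ R.edgeCong p e with hF0
  set A := univ.filter fun i : Fin R.N => t + 1 ≤ R.pathCong p i with hA
  have hlen : ∀ i, (p i).length ≤ R.Lmax := by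
    intro i
    rw [Lmax]
    exact le_trans (Finset.le_sup (f := fun q => SimpleGraph.Walk.length q) (hp.1 i))
      (Finset.le_sup (f := fun j => (R.strat j).sup fun q => q.length) (Finset.mem_univ i))
  have step1 : F1.card * (t + 1) ≤ ∑ e ∈ F1, R.edgeCong p e := by
    have := Finset.card_nsmul_le_sum F1 (R.edgeCong p) (t + 1)
      (fun e he => (Finset.mem_filter.mp he).2)
    simpa [smul_eq_mul] using this
  have step2 : ∑ e ∈ F1, R.edgeCong p e
      = ∑ i : Fin R.N, (F1.filter fun e => e ∈ (p i).edges).card := by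
    simp only [edgeCong, Finset.card_filter]
    rw [Finset.sum_comm]
  have step3 : ∀ i : Fin R.N,
      (F1.filter fun e => e ∈ (p i).edges).card ≤ if i ∈ A then R.Lmax else 0 := by
    intro i
    by_cases hiA : i ∈ A
    · simp only [hiA, if_true]
      calc (F1.filter fun e => e ∈ (p i).edges).card
          ≤ (p i).edges.toFinset.card := by
            apply Finset.card_le_card
            intro e he
            exact List.mem_toFinset.mpr (Finset.mem_filter.mp he).2
        _ ≤ (p i).edges.length := List.toFinset_card_le _
        _ = (p i).length := (p i).length_edges
        _ ≤ R.Lmax := hlen i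
    · simp only [hiA, if_false, Nat.le_zero, Finset.card_eq_zero]
      rw [Finset.filter_eq_empty_iff]
      intro e he hmem
      apply hiA
      simp only [hA, Finset.mem_filter, Finset.mem_univ, true_and]
      calc t + 1 ≤ R.edgeCong p e := (Finset.mem_filter.mp he).2
        _ ≤ R.pathCong p i := Finset.le_sup (List.mem_toFinset.mpr hmem)
  have step4 : ∑ e ∈ F1, R.edgeCong p e ≤ A.card * R.Lmax := by
    rw [step2]
    calc ∑ i : Fin R.N, (F1.filter fun e => e ∈ (p i).edges).card
        ≤ ∑ i : Fin R.N, if i ∈ A then R.Lmax else 0 :=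
          Finset.sum_le_sum fun i _ => step3 i
      _ = ∑ i ∈ A, R.Lmax := by rw [Finset.sum_ite_mem, Finset.univ_inter]
      _ = A.card * R.Lmax := by rw [Finset.sum_const, smul_eq_mul]
  have step5 : A.card ≤ R.SCMax pstar * F0.card := by
    have hjunk : Sym2 V := s(Classical.arbitrary V, Classical.arbitrary V)
    set φ : Fin R.N → Sym2 V := fun i =>
      if h : ∃ e, e ∈ F0 ∧ e ∈ (pstar i).edges then h.choose else hjunk with hφ
    have hEx : ∀ i ∈ A, ∃ e, e ∈ F0 ∧ e ∈ (pstar i).edges := by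
      intro i hi
      obtain ⟨e, he, hce⟩ := R.nash_step' p pstar hp hstar (t + 1) ht i
        (Finset.mem_filter.mp hi).2
      exact ⟨e, by
        simp only [hF0, Finset.mem_filter, Finset.mem_univ, true_and]
        omega, he⟩
    have hmaps : ∀ i ∈ A, φ i ∈ F0 := by
      intro i hi
      have h := hEx i hi
      simp only [hφ, dif_pos h]
      exact h.choose_spec.1
    have hmem : ∀ i ∈ A, φ i ∈ (pstar i).edges := by
      intro i hi
      have h := hEx i hi
      simp only [hφ, dif_pos h]
      exact h.choose_spec.2
    refine Finset.card_le_mul_card_image_of_maps_to hmaps _ ?_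
    intro b hb
    calc (A.filter fun i => φ i = b).card
        ≤ (univ.filter fun i => b ∈ (pstar i).edges).card := by
          apply Finset.card_le_card
          intro i hi
          obtain ⟨hiA, hib⟩ := Finset.mem_filter.mp hi
          simp only [Finset.mem_filter, Finset.mem_univ, true_and]
          rw [← hib]; exact hmem i hiA
      _ = R.edgeCong pstar b := rfl
      _ ≤ R.netCong pstar := Finset.le_sup (Finset.mem_univ b)
      _ ≤ R.SCMax pstar := le_max_left _ _
  calc (t + 1) * F1.card = F1.card * (t + 1) := Nat.mul_comm _ _
    _ ≤ ∑ e ∈ F1, R.edgeCong p e := step1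
    _ ≤ A.card * R.Lmax := step4
    _ ≤ (R.SCMax pstar * F0.card) * R.Lmax := Nat.mul_le_mul_right _ step5
    _ = R.Lmax * (R.SCMax pstar * F0.card) := Nat.mul_comm _ _

lemma len_le_Lmax' (p : R.Routing) (hp : R.IsRouting p) (i : Fin R.N) :
    (p i).length ≤ R.Lmax := by
  rw [Lmax]
  exact le_trans (Finset.le_sup (f := fun q => SimpleGraph.Walk.length q) (hp i))
    (Finset.le_sup (f := fun j => (R.strat j).sup fun q => q.length) (Finset.mem_univ i))

theorem max_price_of_anarchy' (R : RoutingGame V) (p pstar : R.Routing)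
    (hp : R.NashMax p) (hstar : R.IsRouting pstar)
    (hn : 2 ≤ Fintype.card V) :
    R.SCMax p ≤
      (2 * R.Lmax + 2 * Nat.clog 2 (Fintype.card V) + 2) * R.SCMax pstar := by
  classical
  have hV : Nonempty V := Fintype.card_pos_iff.mp (by omega)
  have hS2 : Nonempty (Sym2 V) := ⟨s(Classical.arbitrary V, Classical.arbitrary V)⟩
  set n := Fintype.card V with hn'
  set Cs := R.SCMax pstar with hCs
  set L := R.Lmax with hL
  set C := R.netCong p with hC
  set c := Nat.clog 2 n with hc
  obtain ⟨i0⟩ : Nonempty (Fin R.N) := ⟨⟨0, R.Npos⟩⟩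
  have hL1 : 1 ≤ L := by
    obtain ⟨q, hq⟩ := R.strat_nonempty i0
    calc 1 ≤ q.length := R.strat_len i0 q hq
      _ ≤ (R.strat i0).sup (fun q => q.length) := Finset.le_sup hq
      _ ≤ L := by
          rw [hL, Lmax]
          exact Finset.le_sup (f := fun j => (R.strat j).sup fun q => q.length)
            (Finset.mem_univ i0)
  have hCs1 : 1 ≤ Cs := by
    calc 1 ≤ (pstar i0).length := R.strat_len i0 _ (hstar i0)
      _ ≤ R.maxLen pstar := Finset.le_sup (f := fun j => (pstar j).length)
          (Finset.mem_univ i0)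
      _ ≤ Cs := le_max_right _ _
  set F : ℕ → Finset (Sym2 V) := fun t => univ.filter fun e => t ≤ R.edgeCong p e with hF
  have dbl : ∀ t, 2 * L * Cs ≤ t → 2 * (F (t + 1)).card ≤ (F t).card := by
    intro t ht2
    have hCst : Cs ≤ 2 * L * Cs := by
      calc Cs = 1 * Cs := (Nat.one_mul _).symm
        _ ≤ (2 * L) * Cs := Nat.mul_le_mul_right Cs (by omega)
        _ = 2 * L * Cs := rfl
    have htCs : Cs < t + 1 := by omega
    have key := R.count_step' p pstar hp hstar hV t htCs
    have h2 : (L * Cs) * (2 * (F (t + 1)).card) ≤ (L * Cs) * (F t).card := by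
      calc (L * Cs) * (2 * (F (t + 1)).card) = (2 * L * Cs) * (F (t + 1)).card := by ring
        _ ≤ (t + 1) * (F (t + 1)).card := Nat.mul_le_mul_right _ (by omega)
        _ ≤ L * (Cs * (F t).card) := key
        _ = (L * Cs) * (F t).card := by ring
    exact Nat.le_of_mul_le_mul_left h2 (Nat.mul_pos (by omega) (by omega))
  have grow : ∀ j, 2 * L * Cs + j ≤ C → 2 ^ j ≤ (F (C - j)).card := by
    intro j
    induction j with
    | zero =>
      intro _
      simp only [Nat.sub_zero, pow_zero]
      obtain ⟨e, _, he⟩ := Finset.exists_mem_eq_sup (univ : Finset (Sym2 V))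
        Finset.univ_nonempty (R.edgeCong p)
      have heF : e ∈ F C := Finset.mem_filter.mpr
        ⟨Finset.mem_univ e, by rw [hC, netCong, he]⟩
      exact Finset.card_pos.mpr ⟨e, heF⟩
    | succ j ih =>
      intro hj
      have h1 := ih (by omega)
      have h2 := dbl (C - (j + 1)) (by omega)
      have h3 : C - (j + 1) + 1 = C - j := by omega
      rw [h3] at h2
      calc 2 ^ (j + 1) = 2 * 2 ^ j := by ring
        _ ≤ 2 * (F (C - j)).card := by omega
        _ ≤ (F (C - (j + 1))).card := h2
  have hCbound : C ≤ 2 * L * Cs + 2 * c := by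
    by_cases hbig : 2 * L * Cs + 1 ≤ C
    · have hg := grow (C - 2 * L * Cs) (by omega)
      have heq : C - (C - 2 * L * Cs) = 2 * L * Cs := by omega
      rw [heq] at hg
      have hcard : (F (2 * L * Cs)).card ≤ Fintype.card (Sym2 V) :=
        le_trans (Finset.card_le_card (Finset.filter_subset _ _))
          (le_of_eq Finset.card_univ)
      have hsym : Fintype.card (Sym2 V) = (n + 1).choose 2 := Sym2.card
      have hch : (n + 1).choose 2 ≤ n * n := by
        rw [Nat.choose_two_right]
        have hnn : n ≤ n * n := Nat.le_mul_of_pos_left n (by omega)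
        have hexp : (n + 1) * (n + 1 - 1) = n * n + n := by
          simp only [Nat.add_sub_cancel]; ring
        have h : (n + 1) * (n + 1 - 1) ≤ 2 * (n * n) := by omega
        calc (n + 1) * (n + 1 - 1) / 2 ≤ 2 * (n * n) / 2 := Nat.div_le_div_right h
          _ = n * n := by omega
      have hn2 : n * n ≤ 2 ^ (2 * c) := by
        have h := Nat.le_pow_clog (by norm_num : 1 < 2) n
        calc n * n ≤ 2 ^ c * 2 ^ c := Nat.mul_le_mul h h
          _ = 2 ^ (2 * c) := by rw [← pow_add]; ring_nf
      have hfin : 2 ^ (C - 2 * L * Cs) ≤ 2 ^ (2 * c) := by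
        calc 2 ^ (C - 2 * L * Cs) ≤ (F (2 * L * Cs)).card := hg
          _ ≤ Fintype.card (Sym2 V) := hcard
          _ = (n + 1).choose 2 := hsym
          _ ≤ n * n := hch
          _ ≤ 2 ^ (2 * c) := hn2
      have := (Nat.pow_le_pow_iff_right (by norm_num : 1 < 2)).mp hfin
      omega
    · omega
  have hD : R.maxLen p ≤ L := Finset.sup_le fun i _ => R.len_le_Lmax' p hp.1 i
  have hRHS : (2 * L + 2 * c + 2) * Cs = 2 * L * Cs + 2 * c * Cs + 2 * Cs := by ring
  have h2c : 2 * c ≤ 2 * c * Cs := Nat.le_mul_of_pos_right _ (by omega)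
  rw [SCMax]
  apply max_le
  · omega
  · have : L ≤ 2 * L * Cs := by
      calc L = L * 1 := (Nat.mul_one _).symm
        _ ≤ (2 * L) * Cs := Nat.mul_le_mul (by omega) hCs1
        _ = 2 * L * Cs := rfl
    omega

/-- In any max game on a graph with `n ≥ 2` vertices, for every
Nash-routing `p` and every routing `p*`, the social cost satisfies
`SC(p) ≤ (2L + 2⌈log₂ n⌉ + 2)·SC(p*)`.  In particular, the price of anarchy of
max games is `O(L + log n)`. -/
theorem max_price_of_anarchy (R : RoutingGame V) (p pstar : R.Routing)
    (hp : R.NashMax p) (hstar : R.IsRouting pstar)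
    (hn : 2 ≤ Fintype.card V) :
    R.SCMax p ≤
      (2 * R.Lmax + 2 * Nat.clog 2 (Fintype.card V) + 2) * R.SCMax pstar := by
  exact max_price_of_anarchy' R p pstar hp hstar hn

end RoutingGame
end

section
/- In any sum-bucket game, every sequence of routings in which each routing is obtained from the previous one by a greedy move of a single player is finite; consequently, every sum-bucket game possesses at least one Nash-routing, and best-response dynamics from any initial routing reach a Nash-routing in finitely many steps. -/
open Finset

namespace RoutingGame

variable {V : Type} [Fintype V] [DecidableEq V] (R : RoutingGame V)

/-- Player cost in the sum game: `pc_i(p) = C_i(p) + D_i(p)`. -/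
def pcSum (p : R.Routing) (i : Fin R.N) : ℕ :=
  R.pathCong p i + (p i).length

/-- For a bucket index `b`, the number of players whose path uses edge `e`
and belongs to bucket `b` (the bucket of a path `q` is `⌊log₂ |q|⌋`). -/
def nCongB (p : R.Routing) (b : ℕ) (e : Sym2 V) : ℕ :=
  (Finset.univ.filter fun j => e ∈ (p j).edges ∧ Nat.log 2 (p j).length = b).card

/-- The normalized congestion `C̄_i(p)` of player `i`: the maximum, over the
edges of `p_i`, of the congestion caused by paths in the bucket of `p_i`. -/
def nCong (p : R.Routing) (i : Fin R.N) : ℕ :=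
  (p i).edges.toFinset.sup (R.nCongB p (Nat.log 2 (p i).length))

/-- The normalized length `D̄_i(p) = 2 ^ (B(p_i) + 1) - 1` of player `i`. -/
def nLen (p : R.Routing) (i : Fin R.N) : ℕ :=
  2 ^ (Nat.log 2 (p i).length + 1) - 1

/-- Player cost in the sum-bucket game: `pc_i(p) = C̄_i(p) + D̄_i(p)`. -/
def pcSB (p : R.Routing) (i : Fin R.N) : ℕ := R.nCong p i + R.nLen p i

/-- The normalized congestion `C̄(p)` of a routing. -/
def nC (p : R.Routing) : ℕ := Finset.univ.sup (R.nCong p)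

/-- The normalized length `D̄(p)` of a routing. -/
def nD (p : R.Routing) : ℕ := Finset.univ.sup (R.nLen p)

/-- The normalized edge congestion `C̄_e(p) = max_i C̄_{e,p_i}(p)`. -/
def nCe (p : R.Routing) (e : Sym2 V) : ℕ :=
  Finset.univ.sup fun i => R.nCongB p (Nat.log 2 (p i).length) e

/-- Social cost in the sum-bucket game: `SC(p) = C̄(p) + D̄(p)`. -/
def SCSB (p : R.Routing) : ℕ := R.nC p + R.nD p

/-- A Nash-routing of the sum-bucket game: a routing in which every player is
locally optimal. -/
def NashSB (p : R.Routing) : Prop :=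
  R.IsRouting p ∧
    ∀ i, ∀ q ∈ R.strat i, R.pcSB p i ≤ R.pcSB (Function.update p i q) i

/-- A greedy move in the sum-bucket game takes `p` to `p'` by letting a single
player switch to a strictly cheaper path in its strategy set. -/
def GreedyMoveSB (p p' : R.Routing) : Prop :=
  ∃ i, ∃ q ∈ R.strat i,
    p' = Function.update p i q ∧ R.pcSB p' i < R.pcSB p i

/-- The entry `m_j(p)` of the routing vector of the sum-bucket game: the number
of players whose cost equals `j`. -/
def mvecSB (p : R.Routing) (j : ℕ) : ℕ :=
  (Finset.univ.filter fun i => R.pcSB p i = j).card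

/-- The strict order on routing vectors (sum-bucket game): `M(p') < M(p)` iff
the vectors agree above some index `j` and the entry of `p'` at `j` is smaller. -/
def MLtSB (p' p : R.Routing) : Prop :=
  ∃ j : ℕ, (∀ k, j < k → R.mvecSB p' k = R.mvecSB p k) ∧
    R.mvecSB p' j < R.mvecSB p j

/-- The potential function: `Φ(p) = Σ_i (N+1)^{pc_i(p)}`. -/
def Phi (p : R.Routing) : ℕ := ∑ i, (R.N + 1) ^ R.pcSB p i

lemma nCongB_update_le (p : R.Routing) (i : Fin R.N)
    (q : R.G.Walk (R.src i) (R.dst i)) (b : ℕ) (e : Sym2 V)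
    (h : ¬ (e ∈ q.edges ∧ Nat.log 2 q.length = b)) :
    R.nCongB (Function.update p i q) b e ≤ R.nCongB p b e := by
  apply Finset.card_le_card
  intro k hk
  simp only [Finset.mem_filter, Finset.mem_univ, true_and] at hk ⊢
  by_cases hki : k = i
  · subst hki
    rw [Function.update_self] at hk
    exact absurd hk h
  · rwa [Function.update_of_ne hki] at hk

/-- Key lemma: after a move by player `i`, any other player's cost is at most
the max of its old cost and `i`'s new cost. -/
lemma pcSB_update_le (p : R.Routing) (i j : Fin R.N)
    (q : R.G.Walk (R.src i) (R.dst i)) (hji : j ≠ i) :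
    R.pcSB (Function.update p i q) j ≤
      max (R.pcSB p j) (R.pcSB (Function.update p i q) i) := by
  set p' := Function.update p i q with hp'
  have hpj : p' j = p j := Function.update_of_ne hji _ _
  have hpi : p' i = q := Function.update_self _ _ _
  set b := Nat.log 2 (p j).length with hb
  have hnLenj : R.nLen p' j = R.nLen p j := by
    simp only [nLen, hpj]
  by_cases hbq : Nat.log 2 q.length = b
  · -- same bucket: congestion can rise only on edges of `q`
    have hnLeni : R.nLen p' i = R.nLen p j := by
      simp only [nLen, hpi, hbq, hb]
    have hcong : R.nCong p' j ≤ max (R.nCong p j) (R.nCong p' i) := by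
      simp only [nCong, hpj]
      apply Finset.sup_le
      intro e he
      by_cases heq : e ∈ q.edges
      · refine le_trans ?_ (le_max_right _ _)
        have : R.nCongB p' b e ≤ R.nCong p' i := by
          simp only [nCong, hpi, hbq]
          exact Finset.le_sup (List.mem_toFinset.mpr heq)
        exact this
      · refine le_trans ?_ (le_max_left _ _)
        refine le_trans (R.nCongB_update_le p i q b e (by tauto)) ?_
        exact Finset.le_sup he
    calc R.pcSB p' j = R.nCong p' j + R.nLen p j := by rw [pcSB, hnLenj]
      _ ≤ max (R.nCong p j) (R.nCong p' i) + R.nLen p j :=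
          Nat.add_le_add_right hcong _
      _ = max (R.nCong p j + R.nLen p j) (R.nCong p' i + R.nLen p j) :=
          (max_add_add_right _ _ _).symm
      _ = max (R.pcSB p j) (R.pcSB p' i) := by rw [pcSB, pcSB, hnLeni]
  · -- different bucket: player `j`'s congestion cannot rise at all
    refine le_trans ?_ (le_max_left _ _)
    have hcong : R.nCong p' j ≤ R.nCong p j := by
      simp only [nCong, hpj]
      apply Finset.sup_le
      intro e he
      refine le_trans (R.nCongB_update_le p i q b e (by tauto)) ?_
      exact Finset.le_sup he
    simp only [pcSB, hnLenj]
    exact Nat.add_le_add_right hcong _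

/-- The potential strictly decreases under a greedy move. -/
lemma Phi_lt_of_greedy (p p' : R.Routing) (h : R.GreedyMoveSB p p') :
    R.Phi p' < R.Phi p := by
  obtain ⟨i, q, hq, rfl, hlt⟩ := h
  set p' := Function.update p i q with hp'
  set c := R.pcSB p i with hc
  set c' := R.pcSB p' i with hc'
  have hc1 : 1 ≤ c := by omega
  have hi : i ∈ (Finset.univ : Finset (Fin R.N)) := Finset.mem_univ i
  have hbound : ∀ j ∈ Finset.univ.erase i,
      (R.N + 1) ^ R.pcSB p' j ≤ (R.N + 1) ^ R.pcSB p j + (R.N + 1) ^ (c - 1) := by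
    intro j hj
    have hji : j ≠ i := Finset.ne_of_mem_erase hj
    have h1 := R.pcSB_update_le p i j q hji
    rw [← hp'] at h1
    rcases le_or_gt (R.pcSB p' j) (R.pcSB p j) with hcase | hcase
    · exact le_trans (Nat.pow_le_pow_right (by omega) hcase) (Nat.le_add_right _ _)
    · have h2 : R.pcSB p' j ≤ c - 1 := by
        have := le_max_iff.mp h1
        omega
      exact le_trans (Nat.pow_le_pow_right (by omega) h2) (Nat.le_add_left _ _)
  have hcard : (Finset.univ.erase i).card = R.N - 1 := by
    rw [Finset.card_erase_of_mem hi, Finset.card_univ, Fintype.card_fin]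
  have hsum : ∑ j ∈ Finset.univ.erase i, (R.N + 1) ^ R.pcSB p' j ≤
      (∑ j ∈ Finset.univ.erase i, (R.N + 1) ^ R.pcSB p j)
        + (R.N - 1) * (R.N + 1) ^ (c - 1) := by
    calc ∑ j ∈ Finset.univ.erase i, (R.N + 1) ^ R.pcSB p' j
        ≤ ∑ j ∈ Finset.univ.erase i,
            ((R.N + 1) ^ R.pcSB p j + (R.N + 1) ^ (c - 1)) :=
          Finset.sum_le_sum hbound
      _ = (∑ j ∈ Finset.univ.erase i, (R.N + 1) ^ R.pcSB p j)
            + (R.N - 1) * (R.N + 1) ^ (c - 1) := by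
          rw [Finset.sum_add_distrib, Finset.sum_const, hcard, smul_eq_mul]
  have hci : (R.N + 1) ^ c' ≤ (R.N + 1) ^ (c - 1) :=
    Nat.pow_le_pow_right (by omega) (by omega)
  have hNpos := R.Npos
  have hpow : (R.N + 1) ^ c = (R.N + 1) ^ (c - 1) * (R.N + 1) := by
    rw [← pow_succ]
    congr 1
    omega
  have hpowpos : 0 < (R.N + 1) ^ (c - 1) := Nat.pow_pos (by omega)
  have hPhi' : R.Phi p' = (R.N + 1) ^ c' + ∑ j ∈ Finset.univ.erase i,
      (R.N + 1) ^ R.pcSB p' j := (Finset.add_sum_erase _ _ hi).symm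
  have hPhi : R.Phi p = (R.N + 1) ^ c + ∑ j ∈ Finset.univ.erase i,
      (R.N + 1) ^ R.pcSB p j := (Finset.add_sum_erase _ _ hi).symm
  have hkey : (R.N + 1) ^ (c - 1) + (R.N - 1) * (R.N + 1) ^ (c - 1)
      < (R.N + 1) ^ c := by
    have heq : (R.N + 1) ^ (c - 1) + (R.N - 1) * (R.N + 1) ^ (c - 1)
        = (1 + (R.N - 1)) * (R.N + 1) ^ (c - 1) := by
      rw [add_mul, one_mul]
    rw [hpow, heq, mul_comm ((R.N + 1) ^ (c - 1)) (R.N + 1)]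
    exact (Nat.mul_lt_mul_right hpowpos).mpr (by omega)
  rw [hPhi', hPhi]
  calc (R.N + 1) ^ c' + ∑ j ∈ Finset.univ.erase i, (R.N + 1) ^ R.pcSB p' j
      ≤ (R.N + 1) ^ (c - 1) + (∑ j ∈ Finset.univ.erase i, (R.N + 1) ^ R.pcSB p j
          + (R.N - 1) * (R.N + 1) ^ (c - 1)) := Nat.add_le_add hci hsum
    _ = ((R.N + 1) ^ (c - 1) + (R.N - 1) * (R.N + 1) ^ (c - 1))
          + ∑ j ∈ Finset.univ.erase i, (R.N + 1) ^ R.pcSB p j := by ring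
    _ < (R.N + 1) ^ c + ∑ j ∈ Finset.univ.erase i, (R.N + 1) ^ R.pcSB p j :=
        Nat.add_lt_add_right hkey _

lemma isRouting_update (p : R.Routing) (i : Fin R.N)
    (q : R.G.Walk (R.src i) (R.dst i)) (hp : R.IsRouting p) (hq : q ∈ R.strat i) :
    R.IsRouting (Function.update p i q) := by
  intro j
  by_cases hji : j = i
  · subst hji; rwa [Function.update_self]
  · rw [Function.update_of_ne hji]; exact hp j

/-- From any valid routing, best-response dynamics reach a Nash routing. -/
lemma reach_nash (n : ℕ) : ∀ p₀ : R.Routing, R.Phi p₀ ≤ n → R.IsRouting p₀ →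
    ∃ (T : ℕ) (f : ℕ → R.Routing), f 0 = p₀ ∧
      (∀ t < T, R.GreedyMoveSB (f t) (f (t + 1))) ∧ R.NashSB (f T) := by
  induction n with
  | zero =>
    intro p₀ hphi hr
    exfalso
    have : 0 < R.Phi p₀ := by
      rw [Phi]
      apply Finset.sum_pos
      · intro i _; exact Nat.pow_pos (by omega)
      · exact ⟨⟨0, R.Npos⟩, Finset.mem_univ _⟩
    omega
  | succ n ih =>
    intro p₀ hphi hr
    by_cases hnash : R.NashSB p₀
    · exact ⟨0, fun _ => p₀, rfl, fun t ht => absurd ht (by omega), hnash⟩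
    · have : ∃ i, ∃ q ∈ R.strat i,
          R.pcSB (Function.update p₀ i q) i < R.pcSB p₀ i := by
        by_contra hcon
        push_neg at hcon
        exact hnash ⟨hr, fun i q hq => hcon i q hq⟩
      obtain ⟨i, q, hq, hlt⟩ := this
      set p₁ := Function.update p₀ i q with hp₁
      have hg : R.GreedyMoveSB p₀ p₁ := ⟨i, q, hq, rfl, hlt⟩
      have hphi1 : R.Phi p₁ < R.Phi p₀ := R.Phi_lt_of_greedy p₀ p₁ hg
      obtain ⟨T, f, hf0, hfg, hfn⟩ :=
        ih p₁ (by omega) (R.isRouting_update p₀ i q hr hq)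
      refine ⟨T + 1, fun t => if t = 0 then p₀ else f (t - 1), rfl, ?_, ?_⟩
      · intro t ht
        match t with
        | 0 => simpa [hf0] using hg
        | (s + 1) =>
          have hs : s < T := by omega
          simpa using hfg s hs
      · simpa using hfn

/-- In any sum-bucket game, every sequence of routings in which
each routing is obtained from the previous one by a greedy move of a single
player is finite; consequently, every sum-bucket game possesses at least one
Nash-routing, and best-response dynamics from any initial routing reach a
Nash-routing in finitely many steps. -/
theorem sum_bucket_game_converges (R : RoutingGame V) :
    (¬ ∃ f : ℕ → R.Routing, R.IsRouting (f 0) ∧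
        ∀ t, R.GreedyMoveSB (f t) (f (t + 1))) ∧
    (∃ p : R.Routing, R.NashSB p) ∧
    (∀ p₀ : R.Routing, R.IsRouting p₀ →
      ∃ (T : ℕ) (f : ℕ → R.Routing), f 0 = p₀ ∧
        (∀ t < T, R.GreedyMoveSB (f t) (f (t + 1))) ∧ R.NashSB (f T)) := by
  have hreach : ∀ p₀ : R.Routing, R.IsRouting p₀ →
      ∃ (T : ℕ) (f : ℕ → R.Routing), f 0 = p₀ ∧
        (∀ t < T, R.GreedyMoveSB (f t) (f (t + 1))) ∧ R.NashSB (f T) :=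
    fun p₀ hr => R.reach_nash (R.Phi p₀) p₀ le_rfl hr
  refine ⟨?_, ?_, hreach⟩
  · rintro ⟨f, _, hf⟩
    have key : ∀ t, R.Phi (f t) + t ≤ R.Phi (f 0) := by
      intro t
      induction t with
      | zero => omega
      | succ t ih =>
        have := R.Phi_lt_of_greedy (f t) (f (t + 1)) (hf t)
        omega
    have := key (R.Phi (f 0) + 1)
    omega
  · have hex : ∃ p : R.Routing, R.IsRouting p :=
      ⟨fun i => (R.strat_nonempty i).choose, fun i => (R.strat_nonempty i).choose_spec⟩
    obtain ⟨p₀, hr⟩ := hex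
    obtain ⟨T, g, _, _, hn⟩ := hreach p₀ hr
    exact ⟨g T, hn⟩

end RoutingGame
end
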